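/- Any inconsistency measure I satisfying Monotony, Independent Decomposability, and MinInc is bounded below by the distribution index: I(K) ≥ μ_D(K) for every inconsistent finite knowledge base K. -/
import Mathlib


inductive PropForm (V : Type) : Type
  | var : V → PropForm V
  | neg : PropForm V → PropForm V
  | conj : PropForm V → PropForm V → PropForm V
  | disj : PropForm V → PropForm V → PropForm V
  deriving DecidableEq

namespace PropForm
def eval {V : Type} (v : V → Bool) : PropForm V → Bool
  | var p => v p
  | neg f => !(eval v f)
  | conj f g => eval v f && eval v g
  | disj f g => eval v f || eval v g
end PropForm

/-- A finite knowledge base `K` is satisfiable (consistent) if some valuation makes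
all its formulas true. -/
def Sat {V : Type} (K : Finset (PropForm V)) : Prop :=
  ∃ v : V → Bool, ∀ f ∈ K, f.eval v = true

/-- `M` is a minimal unsatisfiable set: inconsistent, with every proper subset consistent. -/
def IsMUS {V : Type} (M : Finset (PropForm V)) : Prop :=
  ¬ Sat M ∧ ∀ M' ⊂ M, Sat M'

/-- The set of minimal unsatisfiable subsets of `K`. -/
def MUSes {V : Type} (K : Finset (PropForm V)) : Set (Finset (PropForm V)) :=
  {M | M ⊆ K ∧ IsMUS M}

/-- The unfree formulas of `K`: those belonging to some MUS of `K`. -/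
def unfree {V : Type} (K : Finset (PropForm V)) : Set (PropForm V) :=
  ⋃ M ∈ MUSes K, (↑M : Set (PropForm V))

/-- A partial MUS-decomposition of `K`: a family of pairwise-disjoint inconsistent
subsets of `K` such that the MUSes of their union are exactly the disjoint union of
the MUSes of the components. -/
def IsPartialMUSdecomp {V : Type} [DecidableEq V] (K : Finset (PropForm V))
    (T : Finset (Finset (PropForm V))) : Prop :=
  (∀ Ki ∈ T, Ki ⊆ K ∧ ¬ Sat Ki) ∧
  (↑T : Set (Finset (PropForm V))).PairwiseDisjoint id ∧
  MUSes (T.sup id) = ⋃ Ki ∈ T, MUSes Ki ∧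
  (↑T : Set (Finset (PropForm V))).Pairwise fun A B => Disjoint (MUSes A) (MUSes B)

/-- The distribution index: maximal cardinality of a partial MUS-decomposition. -/
noncomputable def muD {V : Type} [DecidableEq V] (K : Finset (PropForm V)) : ℕ :=
  sSup {n : ℕ | ∃ T : Finset (Finset (PropForm V)), IsPartialMUSdecomp K T ∧ T.card = n}

/-- Independent Decomposability of an inconsistency measure. -/
def IndDecomposable {V : Type} [DecidableEq V] (I : Finset (PropForm V) → ℝ) : Prop :=
  ∀ n : ℕ, ∀ K : Fin n → Finset (PropForm V),
    MUSes (Finset.univ.sup K) = ⋃ i, MUSes (K i) →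
    (∀ i j, i ≠ j → Disjoint (MUSes (K i)) (MUSes (K j))) →
    (∀ i j, i ≠ j → unfree (K i) ∩ unfree (K j) = ∅) →
    I (Finset.univ.sup K) = ∑ i, I (K i)

lemma sat_empty {V : Type} : Sat (∅ : Finset (PropForm V)) :=
  ⟨fun _ => true, fun f hf => absurd hf (Finset.notMem_empty f)⟩

lemma exists_mus {V : Type} [DecidableEq V] :
    ∀ K : Finset (PropForm V), ¬ Sat K → ∃ M, M ⊆ K ∧ IsMUS M := by
  intro K
  induction K using Finset.strongInductionOn with
  | _ K ih =>
    intro hK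
    by_cases h : ∀ M' ⊂ K, Sat M'
    · exact ⟨K, subset_rfl, hK, h⟩
    · push_neg at h
      obtain ⟨K', hK', hns⟩ := h
      obtain ⟨M, hMK', hM⟩ := ih K' hK' hns
      exact ⟨M, hMK'.trans hK'.subset, hM⟩

lemma unfree_subset {V : Type} (K : Finset (PropForm V)) :
    unfree K ⊆ (↑K : Set (PropForm V)) := by
  intro x hx
  simp only [unfree, Set.mem_iUnion] at hx
  obtain ⟨M, hM, hxM⟩ := hx
  exact hM.1 hxM

theorem stmt15 {V : Type} [DecidableEq V] (I : Finset (PropForm V) → ℝ)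
    (hmono : ∀ K K' : Finset (PropForm V), I K ≤ I (K ∪ K'))
    (hind : IndDecomposable I)
    (hmininc : ∀ M : Finset (PropForm V), IsMUS M → I M = 1)
    (K : Finset (PropForm V)) (hK : ¬ Sat K) :
    (muD K : ℝ) ≤ I K := by
  classical
  set S : Set ℕ :=
    {n : ℕ | ∃ T : Finset (Finset (PropForm V)), IsPartialMUSdecomp K T ∧ T.card = n} with hS
  -- the set is nonempty (the trivial decomposition {K})
  have hne : S.Nonempty := by
    refine ⟨1, {K}, ⟨?_, ?_, ?_, ?_⟩, Finset.card_singleton K⟩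
    · intro Ki hKi
      rw [Finset.mem_singleton] at hKi
      subst hKi
      exact ⟨subset_rfl, hK⟩
    · simp [Set.pairwiseDisjoint_singleton]
    · simp
    · simp [Set.pairwise_singleton]
  -- the set is bounded above by K.card
  have hbdd : ∀ n ∈ S, n ≤ K.card := by
    rintro n ⟨T, ⟨hsub, hdisj, _, _⟩, rfl⟩
    -- pick one element of each member of T
    have hnonempty : ∀ Ki ∈ T, Ki.Nonempty := by
      intro Ki hKi
      rcases Finset.eq_empty_or_nonempty Ki with h | h
      · exact absurd (h ▸ sat_empty) (hsub Ki hKi).2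
      · exact h
    choose pick hpick using hnonempty
    have hinj : ∀ A (hA : A ∈ T) B (hB : B ∈ T), pick A hA = pick B hB → A = B := by
      intro A hA B hB hEq
      by_contra hAB
      have hd := hdisj (by exact_mod_cast hA) (by exact_mod_cast hB) hAB
      have := Finset.disjoint_left.mp hd (hpick A hA)
      exact this (hEq ▸ hpick B hB)
    -- injective map T → K
    let f : {x // x ∈ T} → PropForm V := fun x => pick x.1 x.2
    have hfinj : Function.Injective f := by
      intro a b hab
      exact Subtype.ext (hinj a.1 a.2 b.1 b.2 hab)
    have hfmem : ∀ x : {x // x ∈ T}, f x ∈ K :=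
      fun x => (hsub x.1 x.2).1 (hpick x.1 x.2)
    calc T.card = Fintype.card {x // x ∈ T} := (Fintype.card_coe T).symm
      _ ≤ Fintype.card {y // y ∈ K} := by
          exact Fintype.card_le_of_injective (fun x => ⟨f x, hfmem x⟩)
            (fun a b hab => hfinj (by simpa using congrArg Subtype.val hab))
      _ = K.card := Fintype.card_coe K
  have hbdd' : BddAbove S := ⟨K.card, fun n hn => hbdd n hn⟩
  have hmem : muD K ∈ S := Nat.sSup_mem hne hbdd'
  obtain ⟨T, ⟨hsub, hdisj, hMus, hMusdisj⟩, hcard⟩ := hmem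
  -- enumerate T
  set n := muD K with hn
  have e : Fin n ≃ {x // x ∈ T} := (finCongr hcard.symm).trans T.equivFin.symm
  set Kf : Fin n → Finset (PropForm V) := fun i => (e i).1 with hKf
  have hKfmem : ∀ i, Kf i ∈ T := fun i => (e i).2
  have hKfinj : Function.Injective Kf := by
    intro i j hij
    exact e.injective (Subtype.ext hij)
  -- sup equality
  have hsup : Finset.univ.sup Kf = T.sup id := by
    apply le_antisymm
    · exact Finset.sup_le fun i _ => Finset.le_sup (f := id) (hKfmem i)
    · refine Finset.sup_le fun x hx => ?_
      have : x = Kf (e.symm ⟨x, hx⟩) := by simp [hKf]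
      rw [this]
      exact Finset.le_sup (f := Kf) (Finset.mem_univ _)
  -- hypotheses of IndDecomposable
  have h1 : MUSes (Finset.univ.sup Kf) = ⋃ i, MUSes (Kf i) := by
    rw [hsup, hMus]
    ext M
    simp only [Set.mem_iUnion]
    constructor
    · rintro ⟨Ki, hKi, hM⟩
      refine ⟨e.symm ⟨Ki, hKi⟩, ?_⟩
      have : Kf (e.symm ⟨Ki, hKi⟩) = Ki := by simp [hKf]
      rw [this]; exact hM
    · rintro ⟨i, hM⟩
      exact ⟨Kf i, hKfmem i, hM⟩
  have h2 : ∀ i j, i ≠ j → Disjoint (MUSes (Kf i)) (MUSes (Kf j)) := by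
    intro i j hij
    exact hMusdisj (by exact_mod_cast hKfmem i) (by exact_mod_cast hKfmem j)
      (fun h => hij (hKfinj h))
  have h3 : ∀ i j, i ≠ j → unfree (Kf i) ∩ unfree (Kf j) = ∅ := by
    intro i j hij
    have hd : Disjoint (Kf i) (Kf j) :=
      hdisj (by exact_mod_cast hKfmem i) (by exact_mod_cast hKfmem j)
        (fun h => hij (hKfinj h))
    ext x
    simp only [Set.mem_inter_iff, Set.mem_empty_iff_false, iff_false, not_and]
    intro hxi hxj
    have h1' := unfree_subset _ hxi
    have h2' := unfree_subset _ hxj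
    exact Finset.disjoint_left.mp hd h1' h2'
  have hdecomp := hind n Kf h1 h2 h3
  -- each component has measure ≥ 1
  have hcomp : ∀ i, (1 : ℝ) ≤ I (Kf i) := by
    intro i
    obtain ⟨M, hMK, hM⟩ := exists_mus (Kf i) (hsub _ (hKfmem i)).2
    have : I M ≤ I (Kf i) := by
      have := hmono M (Kf i)
      rwa [Finset.union_eq_right.mpr hMK] at this
    rw [hmininc M hM] at this
    exact this
  have hsum : (n : ℝ) ≤ ∑ i : Fin n, I (Kf i) := by
    calc (n : ℝ) = ∑ _i : Fin n, (1 : ℝ) := by simp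
      _ ≤ ∑ i, I (Kf i) := Finset.sum_le_sum fun i _ => hcomp i
  -- sup is a subset of K
  have hsubK : Finset.univ.sup Kf ⊆ K := by
    rw [hsup]
    exact Finset.sup_le fun x hx => (hsub x hx).1
  have hfinal : I (Finset.univ.sup Kf) ≤ I K := by
    have := hmono (Finset.univ.sup Kf) K
    rwa [Finset.union_eq_right.mpr hsubK] at this
  calc (muD K : ℝ) = (n : ℝ) := by rw [hn]
    _ ≤ ∑ i, I (Kf i) := hsum
    _ = I (Finset.univ.sup Kf) := hdecomp.symm
    _ ≤ I K := hfinal
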